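/- Let (X,d) be a metric space and FS(X) the set of generalized geodesics with d_FS(c,d) := ∫_ℝ d(c(t),d(t))/(2e^{|t|}) dt. Then d_FS is a metric on FS(X). -/

import Mathlib

open Metric Real MeasureTheory Set

variable {X : Type*}

/-- Witness data for a generalized geodesic: `c` is locally constant outside the
interval `(a, b)` and restricts to an isometric embedding on `[a, b]`. -/
def GenGeodesicWitness [MetricSpace X] (c : ℝ → X) (a b : EReal) : Prop :=
  a ≤ b ∧ a ≠ ⊤ ∧ b ≠ ⊥ ∧
    (∀ s t : ℝ, (s : EReal) ≤ a → (t : EReal) ≤ a → c s = c t) ∧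
    (∀ s t : ℝ, b ≤ (s : EReal) → b ≤ (t : EReal) → c s = c t) ∧
    (∀ s t : ℝ, a ≤ (s : EReal) → (s : EReal) ≤ b → a ≤ (t : EReal) → (t : EReal) ≤ b →
      dist (c s) (c t) = |s - t|)

/-- A generalized geodesic in a metric space. -/
def IsGenGeodesic [MetricSpace X] (c : ℝ → X) : Prop := ∃ a b : EReal, GenGeodesicWitness c a b

/-- The metric of the flow space `FS(X)`. -/
noncomputable def fsDist [MetricSpace X] (c d : ℝ → X) : ℝ :=
  ∫ t : ℝ, dist (c t) (d t) / (2 * Real.exp |t|)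

lemma IsGenGeodesic.lipschitz [MetricSpace X] {c : ℝ → X} (h : IsGenGeodesic c) :
    LipschitzWith 1 c := by
  obtain ⟨a, b, hab, haT, hbB, hL, hR, hI⟩ := h
  have key : ∀ s t : ℝ, s ≤ t → dist (c s) (c t) ≤ t - s := by
    intro s t hst
    by_cases h1 : (t : EReal) ≤ a
    · rw [hL s t (le_trans (by exact_mod_cast hst) h1) h1]
      simpa using by linarith
    by_cases h2 : b ≤ (s : EReal)
    · rw [hR s t h2 (h2.trans (by exact_mod_cast hst))]
      simpa using by linarith
    push_neg at h1 h2
    obtain ⟨s', hss', hs't, has', hs'b, hcs⟩ :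
        ∃ s' : ℝ, s ≤ s' ∧ s' ≤ t ∧ a ≤ (s' : EReal) ∧ (s' : EReal) ≤ b ∧ c s' = c s := by
      by_cases has : a ≤ (s : EReal)
      · exact ⟨s, le_refl s, hst, has, le_of_lt h2, rfl⟩
      · push_neg at has
        have haB : a ≠ ⊥ := ((EReal.bot_lt_coe s).trans has).ne'
        have hae : (a.toReal : EReal) = a := EReal.coe_toReal haT haB
        refine ⟨a.toReal, ?_, ?_, hae.ge, hae.le.trans hab, hL _ _ hae.le has.le⟩
        · exact_mod_cast hae ▸ has.le
        · exact_mod_cast hae ▸ h1.le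
    obtain ⟨t', ht't, hs't', hat', ht'b, hct⟩ :
        ∃ t' : ℝ, t' ≤ t ∧ s' ≤ t' ∧ a ≤ (t' : EReal) ∧ (t' : EReal) ≤ b ∧ c t' = c t := by
      by_cases htb : (t : EReal) ≤ b
      · exact ⟨t, le_refl t, hs't, h1.le, htb, rfl⟩
      · push_neg at htb
        have hbT : b ≠ ⊤ := (htb.trans (EReal.coe_lt_top t)).ne
        have hbe : (b.toReal : EReal) = b := EReal.coe_toReal hbT hbB
        refine ⟨b.toReal, ?_, ?_, hab.trans hbe.ge, hbe.le, hR _ _ hbe.ge htb.le⟩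
        · exact_mod_cast hbe ▸ htb.le
        · exact_mod_cast hbe ▸ hs'b
    calc dist (c s) (c t) = dist (c s') (c t') := by rw [hcs, hct]
      _ = |s' - t'| := hI s' t' has' hs'b hat' ht'b
      _ = t' - s' := by rw [abs_of_nonpos (by linarith)]; ring
      _ ≤ t - s := by linarith
  refine LipschitzWith.of_dist_le_mul fun x y => ?_
  rcases le_total x y with hxy | hxy
  · have := key x y hxy
    rw [Real.dist_eq, abs_of_nonpos (by linarith)]
    simpa using by linarith
  · have := key y x hxy
    rw [dist_comm (c x), Real.dist_eq, abs_of_nonneg (by linarith)]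
    simpa using by linarith

lemma integrable_aux (K : ℝ) : Integrable (fun t : ℝ => (|t| + K) * Real.exp (-|t|)) := by
  set f : ℝ → ℝ := fun x => (x + K) * Real.exp (-x) with hf
  have hIoi : IntegrableOn (fun x => f |x|) (Ioi (0 : ℝ)) := by
    have h1 : IntegrableOn (fun x : ℝ => x * Real.exp (-x)) (Ioi (0 : ℝ)) := by
      have h0 := Real.GammaIntegral_convergent (s := 2) (by norm_num)
      refine MeasureTheory.IntegrableOn.congr_fun h0 (fun x hx => ?_) measurableSet_Ioi
      norm_num [Real.rpow_one, mul_comm]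
    have h2 : IntegrableOn (fun x : ℝ => Real.exp (-x)) (Ioi (0 : ℝ)) := by
      have := exp_neg_integrableOn_Ioi (0 : ℝ) (b := 1) one_pos
      simpa using this
    have h3 : IntegrableOn f (Ioi (0 : ℝ)) := by
      have h0 := h1.add (h2.const_mul K)
      refine MeasureTheory.IntegrableOn.congr_fun h0 (fun x hx => ?_) measurableSet_Ioi
      simp only [hf, Pi.add_apply]; ring
    refine MeasureTheory.IntegrableOn.congr_fun h3 (fun x hx => ?_) measurableSet_Ioi
    rw [abs_of_pos hx]
  have int_Iic : IntegrableOn (fun x => f |x|) (Iic (0 : ℝ)) := by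
    rw [← Measure.map_neg_eq_self (volume : Measure ℝ)]
    have m : MeasurableEmbedding fun x : ℝ => -x := (Homeomorph.neg ℝ).measurableEmbedding
    rw [m.integrableOn_map_iff]
    simp_rw [Function.comp_def, abs_neg, neg_preimage, neg_Iic, neg_zero]
    exact (integrableOn_Ici_iff_integrableOn_Ioi).mpr hIoi
  have : Integrable (fun x => f |x|) := by
    rw [← integrableOn_univ, ← Iic_union_Ioi (a := (0 : ℝ))]
    exact int_Iic.union hIoi
  exact this

lemma dist_growth [MetricSpace X] {c d : ℝ → X} (hc : IsGenGeodesic c) (hd : IsGenGeodesic d)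
    (t : ℝ) : dist (c t) (d t) ≤ 2 * |t| + dist (c 0) (d 0) := by
  have h1 : dist (c t) (c 0) ≤ |t| := by
    have := hc.lipschitz.dist_le_mul t 0
    simpa [Real.dist_eq] using this
  have h2 : dist (d 0) (d t) ≤ |t| := by
    have := hd.lipschitz.dist_le_mul 0 t
    simpa [Real.dist_eq, abs_sub_comm] using this
  calc dist (c t) (d t) ≤ dist (c t) (c 0) + dist (c 0) (d 0) + dist (d 0) (d t) :=
        dist_triangle4 _ _ _ _
    _ ≤ 2 * |t| + dist (c 0) (d 0) := by linarith

lemma fs_integrand_integrable [MetricSpace X] {c d : ℝ → X} (hc : IsGenGeodesic c)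
    (hd : IsGenGeodesic d) :
    Integrable (fun t : ℝ => dist (c t) (d t) / (2 * Real.exp |t|)) := by
  have hcont : Continuous fun t : ℝ => dist (c t) (d t) / (2 * Real.exp |t|) := by
    refine Continuous.div (hc.lipschitz.continuous.dist hd.lipschitz.continuous)
      (continuous_const.mul (Real.continuous_exp.comp continuous_abs)) fun t => ?_
    positivity
  refine (integrable_aux (dist (c 0) (d 0) / 2)).mono' hcont.aestronglyMeasurable ?_
  filter_upwards with t
  rw [Real.norm_eq_abs, abs_of_nonneg (by positivity)]
  rw [div_le_iff₀ (by positivity), Real.exp_neg]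
  have hb := dist_growth hc hd t
  have he : 0 < Real.exp |t| := Real.exp_pos _
  field_simp
  nlinarith [he, hb]

theorem fsDist_is_metric [MetricSpace X] :
    (∀ c d : ℝ → X, IsGenGeodesic c → IsGenGeodesic d → 0 ≤ fsDist c d) ∧
    (∀ c d : ℝ → X, IsGenGeodesic c → IsGenGeodesic d → (fsDist c d = 0 ↔ c = d)) ∧
    (∀ c d : ℝ → X, IsGenGeodesic c → IsGenGeodesic d → fsDist c d = fsDist d c) ∧
    (∀ c d e : ℝ → X, IsGenGeodesic c → IsGenGeodesic d → IsGenGeodesic e →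
      fsDist c e ≤ fsDist c d + fsDist d e) := by
  refine ⟨fun c d _ _ => integral_nonneg fun t => by positivity, ?_, ?_, ?_⟩
  · intro c d hc hd
    constructor
    · intro h0
      have hInt := fs_integrand_integrable hc hd
      have hae : (fun t : ℝ => dist (c t) (d t) / (2 * Real.exp |t|)) =ᵐ[volume] 0 := by
        rw [← integral_eq_zero_iff_of_nonneg (fun t => by positivity) hInt]
        exact h0
      have hcont : Continuous fun t : ℝ => dist (c t) (d t) / (2 * Real.exp |t|) := by
        refine Continuous.div (hc.lipschitz.continuous.dist hd.lipschitz.continuous)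
          (continuous_const.mul (Real.continuous_exp.comp continuous_abs)) fun t => ?_
        positivity
      have heq : (fun t : ℝ => dist (c t) (d t) / (2 * Real.exp |t|)) = 0 :=
        (Continuous.ae_eq_iff_eq volume hcont continuous_const).mp hae
      funext t
      have := congrFun heq t
      simp only [Pi.zero_apply, div_eq_zero_iff] at this
      rcases this with h | h
      · exact dist_eq_zero.mp h
      · exact absurd h (by positivity)
    · rintro rfl
      simp [fsDist]
  · intro c d _ _
    simp [fsDist, dist_comm]
  · intro c d e hc hd he
    rw [fsDist, fsDist, fsDist, ← integral_add (fs_integrand_integrable hc hd)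
      (fs_integrand_integrable hd he)]
    refine integral_mono (fs_integrand_integrable hc he)
      ((fs_integrand_integrable hc hd).add (fs_integrand_integrable hd he)) fun t => ?_
    rw [← add_div]
    gcongr
    exact dist_triangle _ _ _
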